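/- If F is normalized, monotone, and submodular (F(A ∪ {e}) − F(A) ≥ F(B ∪ {e}) − F(B) for all A ⊆ B ⊆ Ω and e ∈ Ω \ B), then the gradient of the partition multilinear extension is antitone on the partition matroid polytope: for all x, y ∈ P = {x ∈ [0,1]^Ω : Σ_{e ∈ Ω_i} x_e ≤ 1 for all i} with x_e ≤ y_e for every e ∈ Ω, one has ∂f̃/∂x_e(x) ≥ ∂f̃/∂x_e(y) for every e ∈ Ω (DR-submodularity of the PME). -/

import Mathlib

open Finset
open scoped Classical

/-- Feasibility in the partition matroid: at most one element per block. -/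
def feasible {N Ω : Type*} [Fintype N] [Fintype Ω] (blk : Ω → N) (A : Finset Ω) : Prop :=
  ∀ i : N, (A.filter (fun e => blk e = i)).card ≤ 1

/-- Per-agent probability factor `p_i(A; x)`. -/
noncomputable def blockProb {N Ω : Type*} [Fintype N] [Fintype Ω] (blk : Ω → N) (x : Ω → ℝ)
    (A : Finset Ω) (i : N) : ℝ :=
  if A.filter (fun e => blk e = i) = ∅ then
    1 - ∑ e ∈ Finset.univ.filter (fun e => blk e = i), x e
  else ∑ e ∈ A.filter (fun e => blk e = i), x e

/-- The partition multilinear extension. -/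
noncomputable def pme {N Ω : Type*} [Fintype N] [Fintype Ω] (blk : Ω → N) (F : Finset Ω → ℝ)
    (x : Ω → ℝ) : ℝ :=
  ∑ A ∈ Finset.univ.filter (fun A => feasible blk A), F A * ∏ i : N, blockProb blk x A i

/-- Partial derivative of `f` in coordinate `e` at `x`. -/
noncomputable def pderiv {Ω : Type*} (f : (Ω → ℝ) → ℝ) (e : Ω) (x : Ω → ℝ) : ℝ :=
  deriv (fun t : ℝ => f (Function.update x e t)) (x e)

/-- Membership in the partition matroid polytope `P`. -/
def memPolytope {N Ω : Type*} [Fintype N] [Fintype Ω] (blk : Ω → N) (x : Ω → ℝ) : Prop :=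
  (∀ e, 0 ≤ x e ∧ x e ≤ 1) ∧
    ∀ i : N, ∑ e ∈ Finset.univ.filter (fun e => blk e = i), x e ≤ 1

/-- Membership in the categorical face `𝓕` of the partition matroid polytope. -/
def memFace {N Ω : Type*} [Fintype N] [Fintype Ω] (blk : Ω → N) (x : Ω → ℝ) : Prop :=
  (∀ e, 0 ≤ x e ∧ x e ≤ 1) ∧
    ∀ i : N, ∑ e ∈ Finset.univ.filter (fun e => blk e = i), x e = 1

/-- Submodularity of a set function. -/
def Submodular {Ω : Type*} [Fintype Ω] (F : Finset Ω → ℝ) : Prop :=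
  ∀ A B : Finset Ω, A ⊆ B → ∀ e ∉ B, F (insert e B) - F B ≤ F (insert e A) - F A

section Aux

variable {N Ω : Type*} [Fintype N] [Fintype Ω] (blk : Ω → N)

/-- Generalized restricted multilinear sum: blocks in `T` are forced empty and excluded
from the product. -/
noncomputable def Phi (T : Finset N) (G : Finset Ω → ℝ) (x : Ω → ℝ) : ℝ :=
  ∑ A ∈ Finset.univ.filter
      (fun A : Finset Ω => feasible blk A ∧ ∀ i ∈ T, A.filter (fun e => blk e = i) = ∅),
    G A * ∏ i ∈ Finset.univ \ T, blockProb blk x A i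

lemma pme_eq_Phi (F : Finset Ω → ℝ) : pme blk F = Phi blk ∅ F := by
  funext x
  unfold pme Phi
  simp

lemma blockProb_update_ne (x : Ω → ℝ) (A : Finset Ω) (e' : Ω) (t : ℝ) {i : N}
    (h : i ≠ blk e') :
    blockProb blk (Function.update x e' t) A i = blockProb blk x A i := by
  unfold blockProb
  have hupd : ∀ s : Finset Ω, (∀ a ∈ s, blk a = i) →
      ∑ a ∈ s, Function.update x e' t a = ∑ a ∈ s, x a := by
    intro s hs
    refine Finset.sum_congr rfl fun a ha => ?_
    have : a ≠ e' := by
      intro hae; exact h ((hae ▸ hs a ha).symm)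
    exact Function.update_of_ne this _ _
  by_cases hA : A.filter (fun e => blk e = i) = ∅
  · rw [if_pos hA, if_pos hA, hupd _ (fun a ha => (Finset.mem_filter.mp ha).2)]
  · rw [if_neg hA, if_neg hA, hupd _ (fun a ha => (Finset.mem_filter.mp ha).2)]

lemma filter_erase_eq (A : Finset Ω) (e' : Ω) {i : N} (h : i ≠ blk e') :
    (A.erase e').filter (fun a => blk a = i) = A.filter (fun a => blk a = i) := by
  ext a
  simp only [Finset.mem_filter, Finset.mem_erase]
  constructor
  · rintro ⟨⟨_, ha⟩, hb⟩; exact ⟨ha, hb⟩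
  · rintro ⟨ha, hb⟩
    refine ⟨⟨?_, ha⟩, hb⟩
    intro hae; exact h (hae ▸ hb).symm

lemma blockProb_erase (x : Ω → ℝ) (A : Finset Ω) (e' : Ω) {i : N} (h : i ≠ blk e') :
    blockProb blk x (A.erase e') i = blockProb blk x A i := by
  unfold blockProb
  rw [filter_erase_eq blk A e' h]

lemma filter_singleton_of_mem {A : Finset Ω} (hA : feasible blk A) {e' : Ω} (he : e' ∈ A) :
    A.filter (fun a => blk a = blk e') = {e'} := by
  have hmem : e' ∈ A.filter (fun a => blk a = blk e') := Finset.mem_filter.mpr ⟨he, rfl⟩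
  have hcard := hA (blk e')
  apply Finset.eq_singleton_iff_unique_mem.mpr
  refine ⟨hmem, fun b hb => ?_⟩
  exact Finset.card_le_one.mp hcard b hb e' hmem

/-- Slope of the block probability in coordinate `e'`. -/
noncomputable def pSlope (A : Finset Ω) (e' : Ω) : ℝ :=
  if e' ∈ A then 1 else if A.filter (fun a => blk a = blk e') = ∅ then -1 else 0

lemma blockProb_update_self (x : Ω → ℝ) {A : Finset Ω} (hA : feasible blk A) (e' : Ω) (t : ℝ) :
    blockProb blk (Function.update x e' t) A (blk e')
      = blockProb blk x A (blk e') + pSlope blk A e' * (t - x e') := by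
  unfold blockProb pSlope
  by_cases he : e' ∈ A
  · have hfil := filter_singleton_of_mem blk hA he
    have hne : A.filter (fun a => blk a = blk e') ≠ ∅ := by
      rw [hfil]; exact Finset.singleton_ne_empty e'
    rw [if_neg hne, if_neg hne, if_pos he, hfil, Finset.sum_singleton, Finset.sum_singleton,
      Function.update_self]
    ring
  · rw [if_neg he]
    by_cases hfil : A.filter (fun a => blk a = blk e') = ∅
    · rw [if_pos hfil, if_pos hfil, if_pos hfil]
      have hmem : e' ∈ Finset.univ.filter (fun a => blk a = blk e') :=
        Finset.mem_filter.mpr ⟨Finset.mem_univ _, rfl⟩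
      rw [Finset.sum_update_of_mem hmem]
      have : ∑ a ∈ Finset.univ.filter (fun a => blk a = blk e'), x a
          = x e' + ∑ a ∈ (Finset.univ.filter (fun a => blk a = blk e')) \ {e'}, x a := by
        rw [Finset.sdiff_singleton_eq_erase, Finset.add_sum_erase _ _ hmem]
      rw [this]
      ring
    · rw [if_neg hfil, if_neg hfil, if_neg hfil]
      have : ∑ a ∈ A.filter (fun a => blk a = blk e'), Function.update x e' t a
          = ∑ a ∈ A.filter (fun a => blk a = blk e'), x a := by
        refine Finset.sum_congr rfl fun a ha => ?_
        have : a ≠ e' := fun hae => he (hae ▸ (Finset.mem_filter.mp ha).1)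
        exact Function.update_of_ne this _ _
      rw [this]
      ring

lemma sdiff_erase_eq (T : Finset N) (j : N) :
    (Finset.univ \ T).erase j = Finset.univ \ insert j T := by
  ext i
  simp only [Finset.mem_erase, Finset.mem_sdiff, Finset.mem_univ, Finset.mem_insert, true_and]
  tauto

lemma Phi_update (T : Finset N) (G : Finset Ω → ℝ) (x : Ω → ℝ) {e' : Ω}
    (hT : blk e' ∉ T) (t : ℝ) :
    Phi blk T G (Function.update x e' t)
      = Phi blk T G x + (t - x e') *
          Phi blk (insert (blk e') T) (fun A => G (insert e' A) - G A) x := by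
  classical
  set Q : Finset Ω → ℝ :=
    fun A => ∏ i ∈ Finset.univ \ insert (blk e') T, blockProb blk x A i with hQ
  have hmemT : blk e' ∈ Finset.univ \ T := Finset.mem_sdiff.mpr ⟨Finset.mem_univ _, hT⟩
  -- product splitting for both points
  have hprod : ∀ A : Finset Ω, feasible blk A →
      ∏ i ∈ Finset.univ \ T, blockProb blk (Function.update x e' t) A i
        = (blockProb blk x A (blk e') + pSlope blk A e' * (t - x e')) * Q A := by
    intro A hA
    rw [← Finset.mul_prod_erase _ _ hmemT, blockProb_update_self blk x hA e' t]
    congr 1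
    rw [sdiff_erase_eq]
    refine Finset.prod_congr rfl fun i hi => ?_
    have hne : i ≠ blk e' := by
      rcases Finset.mem_sdiff.mp hi with ⟨-, hni⟩
      intro h; exact hni (h ▸ Finset.mem_insert_self _ _)
    exact blockProb_update_ne blk x A e' t hne
  have hprodx : ∀ A : Finset Ω,
      ∏ i ∈ Finset.univ \ T, blockProb blk x A i = blockProb blk x A (blk e') * Q A := by
    intro A
    rw [← Finset.mul_prod_erase _ _ hmemT, sdiff_erase_eq]
  set S := Finset.univ.filter
      (fun A : Finset Ω => feasible blk A ∧ ∀ i ∈ T, A.filter (fun e => blk e = i) = ∅) with hS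
  set S' := Finset.univ.filter
      (fun A : Finset Ω => feasible blk A ∧
        ∀ i ∈ insert (blk e') T, A.filter (fun e => blk e = i) = ∅) with hS'
  clear_value S S'
  have key : ∑ A ∈ S, G A * pSlope blk A e' * Q A
      = ∑ B ∈ S', (G (insert e' B) - G B) * Q B := by
    -- split the pSlope into indicator difference
    have hslope : ∀ A : Finset Ω, pSlope blk A e'
        = (if e' ∈ A then (1:ℝ) else 0)
          - (if A.filter (fun a => blk a = blk e') = ∅ then (1:ℝ) else 0) := by
      intro A
      unfold pSlope
      by_cases he : e' ∈ A
      · have hne : A.filter (fun a => blk a = blk e') ≠ ∅ := by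
          intro h
          have : e' ∈ A.filter (fun a => blk a = blk e') := Finset.mem_filter.mpr ⟨he, rfl⟩
          rw [h] at this; exact absurd this (Finset.notMem_empty _)
        rw [if_pos he, if_pos he, if_neg hne]; ring
      · rw [if_neg he, if_neg he]
        by_cases hfil : A.filter (fun a => blk a = blk e') = ∅ <;> simp [hfil]
    have hsplit : ∑ A ∈ S, G A * pSlope blk A e' * Q A
        = (∑ A ∈ S.filter (fun A => e' ∈ A), G A * Q A)
          - ∑ A ∈ S.filter (fun A => A.filter (fun a => blk a = blk e') = ∅), G A * Q A := by
      rw [Finset.sum_filter, Finset.sum_filter, ← Finset.sum_sub_distrib]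
      refine Finset.sum_congr rfl fun A _ => ?_
      rw [hslope A]
      by_cases he : e' ∈ A <;> by_cases hfil : A.filter (fun a => blk a = blk e') = ∅ <;>
        simp [he, hfil] <;> ring
    have hSempty : S.filter (fun A => A.filter (fun a => blk a = blk e') = ∅) = S' := by
      rw [hS, hS', Finset.filter_filter]
      refine Finset.filter_congr fun A _ => ?_
      simp only [Finset.forall_mem_insert]
      tauto
    have hbij : ∑ A ∈ S.filter (fun A => e' ∈ A), G A * Q A
        = ∑ B ∈ S', G (insert e' B) * Q B := by
      refine Finset.sum_nbij' (fun A => A.erase e') (fun B => insert e' B) ?_ ?_ ?_ ?_ ?_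
      · intro A hA
        rcases Finset.mem_filter.mp hA with ⟨hAS, heA⟩
        rcases Finset.mem_filter.mp (hS ▸ hAS) with ⟨-, hfeas, hTempty⟩
        rw [hS']
        refine Finset.mem_filter.mpr ⟨Finset.mem_univ _, ?_, ?_⟩
        · intro i
          calc ((A.erase e').filter (fun e => blk e = i)).card
              ≤ (A.filter (fun e => blk e = i)).card :=
                Finset.card_le_card (Finset.filter_subset_filter _ (Finset.erase_subset _ _))
            _ ≤ 1 := hfeas i
        · intro i hi
          rcases Finset.mem_insert.mp hi with hi | hi
          · subst hi
            rw [Finset.filter_erase, filter_singleton_of_mem blk hfeas heA,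
              Finset.erase_singleton]
          · have : i ≠ blk e' := fun h => hT (h ▸ hi)
            rw [filter_erase_eq blk A e' this, hTempty i hi]
      · intro B hB
        rcases Finset.mem_filter.mp (hS' ▸ hB) with ⟨-, hfeas, hEmpty⟩
        have hbe : B.filter (fun e => blk e = blk e') = ∅ :=
          hEmpty _ (Finset.mem_insert_self _ _)
        have he'B : e' ∉ B := by
          intro h
          have : e' ∈ B.filter (fun e => blk e = blk e') := Finset.mem_filter.mpr ⟨h, rfl⟩
          rw [hbe] at this; exact absurd this (Finset.notMem_empty _)
        rw [hS]
        refine Finset.mem_filter.mpr ⟨Finset.mem_filter.mpr ⟨Finset.mem_univ _, ?_, ?_⟩,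
          Finset.mem_insert_self _ _⟩
        · intro i
          by_cases hie : i = blk e'
          · subst hie
            rw [Finset.filter_insert, if_pos rfl, hbe]
            simp
          · rw [Finset.filter_insert, if_neg (fun h => hie h.symm)]
            exact hfeas i
        · intro i hi
          have hie : i ≠ blk e' := fun h => hT (h ▸ hi)
          rw [Finset.filter_insert, if_neg (fun h => hie h.symm), hEmpty i (Finset.mem_insert_of_mem hi)]
      · intro A hA
        exact Finset.insert_erase (Finset.mem_filter.mp hA).2
      · intro B hB
        rcases Finset.mem_filter.mp (hS' ▸ hB) with ⟨-, -, hEmpty⟩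
        have hbe : B.filter (fun e => blk e = blk e') = ∅ :=
          hEmpty _ (Finset.mem_insert_self _ _)
        have he'B : e' ∉ B := by
          intro h
          have : e' ∈ B.filter (fun e => blk e = blk e') := Finset.mem_filter.mpr ⟨h, rfl⟩
          rw [hbe] at this; exact absurd this (Finset.notMem_empty _)
        exact Finset.erase_insert he'B
      · intro A hA
        have heA : e' ∈ A := (Finset.mem_filter.mp hA).2
        rw [Finset.insert_erase heA]
        congr 1
        rw [hQ]
        refine Finset.prod_congr rfl fun i hi => ?_
        have hne : i ≠ blk e' := by
          rcases Finset.mem_sdiff.mp hi with ⟨-, hni⟩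
          intro h; exact hni (h ▸ Finset.mem_insert_self _ _)
        exact (blockProb_erase blk x A e' hne).symm
    rw [hsplit, hSempty, hbij, ← Finset.sum_sub_distrib]
    refine Finset.sum_congr rfl fun B _ => ?_
    ring
  -- assemble
  unfold Phi
  rw [← hS, ← hS']
  have hlhs : ∑ A ∈ S, G A * ∏ i ∈ Finset.univ \ T, blockProb blk (Function.update x e' t) A i
      = (∑ A ∈ S, G A * (blockProb blk x A (blk e') * Q A))
        + (t - x e') * ∑ A ∈ S, G A * pSlope blk A e' * Q A := by
    rw [Finset.mul_sum, ← Finset.sum_add_distrib]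
    refine Finset.sum_congr rfl fun A hA => ?_
    have hfeas : feasible blk A := (Finset.mem_filter.mp (hS ▸ hA)).2.1
    rw [hprod A hfeas]
    ring
  rw [hlhs, key]
  have : ∑ A ∈ S, G A * ∏ i ∈ Finset.univ \ T, blockProb blk x A i
      = ∑ A ∈ S, G A * (blockProb blk x A (blk e') * Q A) := by
    refine Finset.sum_congr rfl fun A _ => ?_
    rw [hprodx A]
  rw [this]

lemma pderiv_Phi (T : Finset N) (G : Finset Ω → ℝ) (x : Ω → ℝ) {e' : Ω} (hT : blk e' ∉ T) :
    pderiv (Phi blk T G) e' x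
      = Phi blk (insert (blk e') T) (fun A => G (insert e' A) - G A) x := by
  unfold pderiv
  have hfun : (fun t : ℝ => Phi blk T G (Function.update x e' t))
      = fun t : ℝ => Phi blk T G x + (t - x e') *
          Phi blk (insert (blk e') T) (fun A => G (insert e' A) - G A) x := by
    funext t
    exact Phi_update blk T G x hT t
  rw [hfun]
  set c := Phi blk (insert (blk e') T) (fun A => G (insert e' A) - G A) x
  have h : HasDerivAt (fun t : ℝ => Phi blk T G x + (t - x e') * c) c (x e') := by
    have h1 : HasDerivAt (fun t : ℝ => (t - x e') * c) c (x e') := by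
      simpa using ((hasDerivAt_id (x e')).sub_const (x e')).mul_const c
    simpa using h1.const_add (Phi blk T G x)
  exact h.deriv

lemma Phi_update_mem (T : Finset N) (G : Finset Ω → ℝ) (x : Ω → ℝ) {e' : Ω}
    (hT : blk e' ∈ T) (t : ℝ) :
    Phi blk T G (Function.update x e' t) = Phi blk T G x := by
  unfold Phi
  refine Finset.sum_congr rfl fun A _ => ?_
  congr 1
  refine Finset.prod_congr rfl fun i hi => ?_
  have hne : i ≠ blk e' := by
    rcases Finset.mem_sdiff.mp hi with ⟨-, hni⟩
    intro h; exact hni (h ▸ hT)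
  exact blockProb_update_ne blk x A e' t hne

lemma blockProb_nonneg (x : Ω → ℝ) (hx : ∀ e, 0 ≤ x e)
    (hs : ∀ i : N, ∑ e ∈ Finset.univ.filter (fun e => blk e = i), x e ≤ 1)
    (A : Finset Ω) (i : N) : 0 ≤ blockProb blk x A i := by
  unfold blockProb
  by_cases h : A.filter (fun e => blk e = i) = ∅
  · rw [if_pos h]; linarith [hs i]
  · rw [if_neg h]
    exact Finset.sum_nonneg fun a _ => hx a

end Aux

/-- if `F` is normalized, monotone, and submodular, the gradient of the
partition multilinear extension is antitone on the partition matroid polytope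
(DR-submodularity of the PME). -/
theorem pme_gradient_antitone {N Ω : Type*} [Fintype N] [Fintype Ω]
    (blk : Ω → N) (hblk : Function.Surjective blk)
    (F : Finset Ω → ℝ)
    (hnorm : F ∅ = 0)
    (hmono : ∀ A B : Finset Ω, A ⊆ B → F A ≤ F B)
    (hsub : Submodular F) :
    ∀ x y : Ω → ℝ, memPolytope blk x → memPolytope blk y → (∀ e : Ω, x e ≤ y e) →
      ∀ e : Ω, pderiv (pme blk F) e y ≤ pderiv (pme blk F) e x := by
  intro x y hx hy hxy e
  classical
  set G : Finset Ω → ℝ := fun A => F (insert e A) - F A with hG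
  set T1 : Finset N := insert (blk e) (∅ : Finset N) with hT1
  -- derivative formula
  have hderiv : ∀ z : Ω → ℝ, pderiv (pme blk F) e z = Phi blk T1 G z := by
    intro z
    rw [pme_eq_Phi blk F]
    exact pderiv_Phi blk ∅ F z (Finset.notMem_empty _)
  rw [hderiv x, hderiv y]
  -- single-step monotonicity
  have hstep : ∀ z : Ω → ℝ, (∀ a, 0 ≤ z a) →
      (∀ i : N, ∑ a ∈ Finset.univ.filter (fun a => blk a = i), z a ≤ 1) →
      ∀ e' : Ω, ∀ t : ℝ, z e' ≤ t →
        Phi blk T1 G (Function.update z e' t) ≤ Phi blk T1 G z := by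
    intro z hz0 hz1 e' t hzt
    by_cases hcase : blk e' ∈ T1
    · rw [Phi_update_mem blk T1 G z hcase t]
    · rw [Phi_update blk T1 G z hcase t]
      have hneg : Phi blk (insert (blk e') T1) (fun A => G (insert e' A) - G A) z ≤ 0 := by
        unfold Phi
        refine Finset.sum_nonpos fun A hA => ?_
        rcases Finset.mem_filter.mp hA with ⟨-, hfeas, hEmpty⟩
        have heA : e ∉ A := by
          intro h
          have h1 : A.filter (fun a => blk a = blk e) = ∅ :=
            hEmpty _ (Finset.mem_insert_of_mem (Finset.mem_insert_self _ _))
          have : e ∈ A.filter (fun a => blk a = blk e) := Finset.mem_filter.mpr ⟨h, rfl⟩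
          rw [h1] at this; exact absurd this (Finset.notMem_empty _)
      -- e ∉ insert e' A since blk e ≠ blk e'
        have hee' : e ≠ e' := by
          intro h
          exact hcase (by rw [hT1]; exact h ▸ Finset.mem_insert_self _ _)
        have heA' : e ∉ insert e' A := by
          simp only [Finset.mem_insert]
          rintro (h | h)
          · exact hee' h
          · exact heA h
        have hsubm := hsub A (insert e' A) (Finset.subset_insert _ _) e heA'
        have hGle : G (insert e' A) - G A ≤ 0 := by
          rw [hG]
          simp only
          linarith [hsubm]
        have hQ : 0 ≤ ∏ i ∈ Finset.univ \ insert (blk e') T1, blockProb blk z A i :=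
          Finset.prod_nonneg fun i _ => blockProb_nonneg blk z hz0 hz1 A i
        exact mul_nonpos_of_nonpos_of_nonneg hGle hQ
      nlinarith [hneg, hzt]
  -- walk from x to y coordinate by coordinate
  set zf : Finset Ω → (Ω → ℝ) := fun s => fun a => if a ∈ s then y a else x a with hzf
  have hz0 : ∀ s a, 0 ≤ zf s a := by
    intro s a
    rw [hzf]
    by_cases h : a ∈ s <;> simp [h]
    · exact (hy.1 a).1
    · exact (hx.1 a).1
  have hzley : ∀ s a, zf s a ≤ y a := by
    intro s a
    rw [hzf]
    by_cases h : a ∈ s <;> simp [h]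
    exact hxy a
  have hz1 : ∀ s (i : N), ∑ a ∈ Finset.univ.filter (fun a => blk a = i), zf s a ≤ 1 := by
    intro s i
    calc ∑ a ∈ Finset.univ.filter (fun a => blk a = i), zf s a
        ≤ ∑ a ∈ Finset.univ.filter (fun a => blk a = i), y a :=
          Finset.sum_le_sum fun a _ => hzley s a
      _ ≤ 1 := hy.2 i
  have hmain : ∀ s : Finset Ω, Phi blk T1 G (zf s) ≤ Phi blk T1 G x := by
    intro s
    induction s using Finset.induction_on with
    | empty =>
      have : zf ∅ = x := by funext a; simp [hzf]
      rw [this]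
    | @insert e' s he's ih =>
      have hupd : zf (insert e' s) = Function.update (zf s) e' (y e') := by
        funext a
        by_cases h : a = e'
        · subst h
          simp [hzf, Function.update_self]
        · rw [Function.update_of_ne h]
          simp only [hzf, Finset.mem_insert]
          by_cases hs : a ∈ s <;> simp [hs, h]
      rw [hupd]
      calc Phi blk T1 G (Function.update (zf s) e' (y e'))
          ≤ Phi blk T1 G (zf s) := by
            refine hstep (zf s) (hz0 s) (hz1 s) e' (y e') ?_
            exact hzley s e'
        _ ≤ Phi blk T1 G x := ih
  have hy' : zf Finset.univ = y := by
    funext a; simp [hzf]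
  calc Phi blk T1 G y = Phi blk T1 G (zf Finset.univ) := by rw [hy']
    _ ≤ Phi blk T1 G x := hmain Finset.univ
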